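/- Let w be a permutation of {1,…,n} and let p = p₁⋯pₙ = φ(w) be its associated Motzkin path. Then dep(w) = Σ_{k : p_k = D} k − Σ_{i : p_i = U} i. -/

import Mathlib

/-- The three kinds of steps of a Motzkin path. -/
inductive Step : Type
  | U : Step
  | D : Step
  | H : Step
deriving DecidableEq
instance : Fintype Step := ⟨{Step.U, Step.D, Step.H}, fun x => by cases x <;> decide⟩
/-- The map `φ` from permutations of `{1,…,n}` to words over `{U,D,H}`:
`p_i = U` if `w⁻¹(i) > i < w(i)`, `p_i = D` if `w⁻¹(i) < i > w(i)`,
and `p_i = H` otherwise. -/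
def phi {n : ℕ} (w : Equiv.Perm (Fin n)) : Fin n → Step := fun i =>
  if i < w.symm i ∧ i < w i then Step.U
  else if w.symm i < i ∧ w i < i then Step.D
  else Step.H
/-- The depth of a permutation `w` of `{1,…,n}`:
`dep(w) = ∑_{i : w(i) > i} (w(i) - i)`. -/
def dep {n : ℕ} (w : Equiv.Perm (Fin n)) : ℕ :=
  ∑ i ∈ Finset.univ.filter (fun i : Fin n => i < w i), ((w i : ℕ) - (i : ℕ))

lemma phi_eq_U_iff {n : ℕ} (w : Equiv.Perm (Fin n)) (i : Fin n) :
    phi w i = Step.U ↔ i < w.symm i ∧ i < w i := by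
  unfold phi; split_ifs with h1 h2 <;> simp_all

lemma phi_eq_D_iff {n : ℕ} (w : Equiv.Perm (Fin n)) (i : Fin n) :
    phi w i = Step.D ↔ w.symm i < i ∧ w i < i := by
  unfold phi; split_ifs with h1 h2 <;> simp_all
  exact fun h => absurd h (asymm h1.1)

lemma fix_iff {n : ℕ} (w : Equiv.Perm (Fin n)) (i : Fin n) :
    w i = i ↔ w.symm i = i := by
  rw [Equiv.symm_apply_eq]; exact eq_comm

/-- If `p = φ(w)` is the Motzkin path associated to a permutation `w` of
`{1,…,n}`, then `dep(w) = ∑_{k : p_k = D} k - ∑_{i : p_i = U} i`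
(positions numbered `1,…,n`). -/
theorem dep_eq_sum_D_sub_sum_U (n : ℕ) (w : Equiv.Perm (Fin n)) :
    (dep w : ℤ) =
      (∑ k ∈ Finset.univ.filter (fun k : Fin n => phi w k = Step.D),
        (((k : ℕ) : ℤ) + 1))
      - ∑ i ∈ Finset.univ.filter (fun i : Fin n => phi w i = Step.U),
          (((i : ℕ) : ℤ) + 1) := by
  classical
  set S1 : Finset (Fin n) := Finset.univ.filter (fun i : Fin n => i < w i) with hS1
  set A : Finset (Fin n) := Finset.univ.filter (fun j : Fin n => w.symm j < j) with hA
  set DD : Finset (Fin n) := Finset.univ.filter (fun k : Fin n => phi w k = Step.D) with hDD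
  set UU : Finset (Fin n) := Finset.univ.filter (fun i : Fin n => phi w i = Step.U) with hUU
  have hAimg : A = S1.image w := by
    ext j
    simp only [hA, hS1, Finset.mem_filter, Finset.mem_univ, true_and, Finset.mem_image]
    constructor
    · intro h; exact ⟨w.symm j, by simpa using h, by simp⟩
    · rintro ⟨i, hi, rfl⟩; simpa using hi
  have hdep : (dep w : ℤ) = (∑ j ∈ A, ((j : ℕ) : ℤ)) - ∑ i ∈ S1, ((i : ℕ) : ℤ) := by
    have h1 : (dep w : ℤ) = ∑ i ∈ S1, (((w i : ℕ) : ℤ) - ((i : ℕ) : ℤ)) := by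
      rw [dep, Nat.cast_sum]
      refine Finset.sum_congr rfl fun i hi => ?_
      have : (i : ℕ) ≤ (w i : ℕ) := le_of_lt (Finset.mem_filter.mp hi).2
      omega
    rw [h1, Finset.sum_sub_distrib, hAimg,
      Finset.sum_image (fun a _ b _ h => w.injective h)]
  have hAsplit : A.filter (fun j => w j < j) = DD := by
    ext j
    simp only [hA, hDD, Finset.filter_filter, Finset.mem_filter, Finset.mem_univ, true_and,
      phi_eq_D_iff, and_comm]
  have hAsplit2 : A.filter (fun j => ¬ w j < j) = S1.filter (fun i => w.symm i < i) := by
    ext j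
    simp only [hA, hS1, Finset.filter_filter, Finset.mem_filter, Finset.mem_univ, true_and]
    constructor
    · rintro ⟨h1, h2⟩
      refine ⟨lt_of_le_of_ne (not_lt.mp h2) ?_, h1⟩
      intro h
      exact absurd h1 (by rw [(fix_iff w j).mp h.symm]; exact lt_irrefl j)
    · rintro ⟨h1, h2⟩; exact ⟨h2, not_lt.mpr (le_of_lt h1)⟩
  have hS1split : S1.filter (fun i => ¬ w.symm i < i) = UU := by
    ext i
    simp only [hS1, hUU, Finset.filter_filter, Finset.mem_filter, Finset.mem_univ, true_and,
      phi_eq_U_iff]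
    constructor
    · rintro ⟨h1, h2⟩
      refine ⟨lt_of_le_of_ne (not_lt.mp h2) ?_, h1⟩
      intro h
      exact absurd h1 (by rw [(fix_iff w i).mpr h.symm]; exact lt_irrefl i)
    · rintro ⟨h1, h2⟩; exact ⟨h2, not_lt.mpr (le_of_lt h1)⟩
  have hcardA : A.card = S1.card := by
    rw [hAimg, Finset.card_image_of_injective _ w.injective]
  have hcard : DD.card = UU.card := by
    have h1 := Finset.card_filter_add_card_filter_not
      (s := A) (p := fun j => w j < j)
    have h2 := Finset.card_filter_add_card_filter_not
      (s := S1) (p := fun i => w.symm i < i)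
    rw [hAsplit, hAsplit2] at h1
    have h3 : S1.filter (fun i => ¬ w.symm i < i) = UU := hS1split
    rw [h3] at h2
    omega
  have e1 : (∑ j ∈ A, ((j : ℕ) : ℤ)) =
      (∑ j ∈ DD, ((j : ℕ) : ℤ)) + ∑ j ∈ S1.filter (fun i => w.symm i < i), ((j : ℕ) : ℤ) := by
    rw [← hAsplit, ← hAsplit2,
      Finset.sum_filter_add_sum_filter_not A (fun j => w j < j)]
  have e2 : (∑ i ∈ S1, ((i : ℕ) : ℤ)) =
      (∑ i ∈ S1.filter (fun i => w.symm i < i), ((i : ℕ) : ℤ)) + ∑ i ∈ UU, ((i : ℕ) : ℤ) := by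
    rw [← hS1split, Finset.sum_filter_add_sum_filter_not S1 (fun i => w.symm i < i)]
  rw [hdep, e1, e2, Finset.sum_add_distrib, Finset.sum_add_distrib,
    Finset.sum_const, Finset.sum_const, hcard]
  ring
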